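/- Let A be a pca with K₂(A) compatible with A, and B ⊆ A^A nonempty and closed under the application of K₂(A). If for every a ∈ A there is an element of B extending the partial function x ↦ ax represented by a, then B is downwards closed with respect to ≤_T: whenever γ ∈ B and β ≤_T γ, then β ∈ B. -/

import Mathlib

open Classical

noncomputable section

namespace OostenK2

universe u

/-! ### Finite partial functions -/

/-- Finite partial functions `A ⇀ A`, as finite functional graphs,
ordered by inclusion of graphs. -/
abbrev FPF (A : Type u) : Type u :=
  {p : Set (A × A) // (∀ ⦃a b b'⦄, (a, b) ∈ p → (a, b') ∈ p → b = b') ∧ p.Finite}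

variable {A : Type u}

/-- The domain of a finite partial function. -/
def FPF.dom (p : FPF A) : Set A := Prod.fst '' p.val

/-- The empty finite partial function (the root of sequential trees). -/
def FPF.empty (A : Type u) : FPF A :=
  ⟨∅, fun _ _ _ h => absurd h (Set.notMem_empty _), Set.finite_empty⟩

/-- A total function `α` extends the finite partial function `p`. -/
def agrees (α : A → A) (p : FPF A) : Prop := ∀ ⦃a b⦄, (a, b) ∈ p.val → α a = b

/-- A partial function `β` extends the finite partial function `p`. -/
def agreesP (β : A → Option A) (p : FPF A) : Prop :=
  ∀ ⦃a b⦄, (a, b) ∈ p.val → β a = some b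

/-- Two finite partial functions are compatible if their union is a function. -/
def compatFPF (s t : FPF A) : Prop :=
  ∀ ⦃a b b'⦄, (a, b) ∈ s.val → (a, b') ∈ t.val → b = b'

/-! ### Trees -/

section Trees

variable {X : Type*} [PartialOrder X]

/-- A leaf of `T`: an element of `T` with no strict extension in `T`. -/
def IsLeaf (T : Set X) (p : X) : Prop := p ∈ T ∧ ¬∃ q ∈ T, p < q

/-- `q` is an immediate successor of `p` in `T`. -/
def ImmSucc (T : Set X) (p q : X) : Prop :=
  q ∈ T ∧ p < q ∧ ¬∃ t ∈ T, p < t ∧ t < q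

/-- `T` is a tree with root `root`: the root belongs to `T`, lies below every
element, and the predecessors of any element form a chain. -/
def IsTreeOn (root : X) (T : Set X) : Prop :=
  root ∈ T ∧ (∀ p ∈ T, root ≤ p) ∧ ∀ p ∈ T, IsChain (· ≤ ·) {t | t ∈ T ∧ t ≤ p}

/-- A tree is well-founded iff it has no infinite strictly increasing path. -/
def WellFoundedTree (T : Set X) : Prop :=
  ¬∃ f : ℕ → X, (∀ n, f n ∈ T) ∧ StrictMono f

end Trees

/-- A sequential tree: a tree of finite partial functions, rooted at the empty
function, in which all immediate successors of a non-leaf `p` have domain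
`dom p ∪ {a}` for a single `a ∉ dom p`. -/
def IsSeqTree (T : Set (FPF A)) : Prop :=
  IsTreeOn (FPF.empty A) T ∧
  ∀ p ∈ T, ¬IsLeaf T p →
    ∃ a ∉ FPF.dom p, ∀ q, ImmSucc T p q → FPF.dom q = insert a (FPF.dom p)

/-- A total sequential tree: the immediate successors of a non-leaf `p` are
*all* extensions of `p` with domain `dom p ∪ {a}`. -/
def IsTotalSeqTree (T : Set (FPF A)) : Prop :=
  IsTreeOn (FPF.empty A) T ∧
  ∀ p ∈ T, ¬IsLeaf T p →
    ∃ a ∉ FPF.dom p,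
      ∀ q : FPF A, ImmSucc T p q ↔ p < q ∧ FPF.dom q = insert a (FPF.dom p)

/-- `Φ` (as a relation `(A → A) → A → Prop`) is a partial sequential function:
`Φ α = b` iff the path of `α` through some total sequential tree `T` ends in a
leaf `v` with `F v = b`. -/
def SeqRel (Φ : (A → A) → A → Prop) : Prop :=
  ∃ (T : Set (FPF A)) (F : FPF A → A), IsTotalSeqTree T ∧
    ∀ α b, Φ α b ↔ ∃ v, IsLeaf T v ∧ agrees α v ∧ F v = b

/-- A total bisequential tree: pairs of finite partial functions ordered by
pairwise inclusion; at every non-leaf, either the first or the second component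
is interrogated at a single new argument, with all possible answers present. -/
def IsTotalBiTree (T : Set (FPF A × FPF A)) : Prop :=
  IsTreeOn (FPF.empty A, FPF.empty A) T ∧
  ∀ p ∈ T, ¬IsLeaf T p →
    (∃ a ∉ FPF.dom p.1, ∀ q : FPF A × FPF A,
        ImmSucc T p q ↔ q.2 = p.2 ∧ p.1 ≤ q.1 ∧ FPF.dom q.1 = insert a (FPF.dom p.1)) ∨
    (∃ b ∉ FPF.dom p.2, ∀ q : FPF A × FPF A,
        ImmSucc T p q ↔ q.1 = p.1 ∧ p.2 ≤ q.2 ∧ FPF.dom q.2 = insert b (FPF.dom p.2))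

/-- `G` is a total bisequential function. -/
def BiSeqTotal (G : (A → A) → (A → A) → A) : Prop :=
  ∃ (T : Set (FPF A × FPF A)) (F : FPF A × FPF A → A), IsTotalBiTree T ∧
    ∀ α β, ∃ v, IsLeaf T v ∧ agrees α v.1 ∧ agrees β v.2 ∧ G α β = F v

/-! ### Interrogations (total functions)

Throughout, `mk : List A → A` is an injective coding of finite sequences,
`qp b` is the code `⟨q,b⟩` of a query and `rp c` the code `⟨r,c⟩` of a result. -/

/-- `L` is an interrogation of `β` by `α`. -/
def Interrog (mk : List A → A) (qp : A → A) (α β : A → A) (L : List A) : Prop :=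
  ∀ j (hj : j < L.length), ∃ b, α (mk (L.take j)) = qp b ∧ β b = L[j]'hj

/-- `φ_α(β) = c` via interrogations. -/
def phiRel (mk : List A → A) (qp rp : A → A) (α β : A → A) (c : A) : Prop :=
  ∃ L, Interrog mk qp α β L ∧ α (mk L) = rp c

/-- `L` is an `a`-interrogation of `β` by `α`. -/
def AInterrog (mk : List A → A) (qp : A → A) (a : A) (α β : A → A) (L : List A) : Prop :=
  ∀ j (hj : j < L.length), ∃ b, α (mk (a :: L.take j)) = qp b ∧ β b = L[j]'hj

/-- `φ^a(α,β) = c` via `a`-interrogations. -/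
def phiA (mk : List A → A) (qp rp : A → A) (a : A) (α β : A → A) (c : A) : Prop :=
  ∃ L, AInterrog mk qp a α β L ∧ α (mk (a :: L)) = rp c

/-- The application of `K₂(A)`: `αβ` is defined with value `γ` iff
`φ^a(α,β) = γ a` for every `a`. -/
def AppRel (mk : List A → A) (qp rp : A → A) (α β γ : A → A) : Prop :=
  ∀ a, phiA mk qp rp a α β (γ a)

/-! ### Partial combinatory algebras (abstractly) -/

/-- A set with a partial binary application. -/
structure PCAStruct (X : Type*) where
  app : X → X → Part X

/-- Extension of the application to `Part`; `Part`-equality is Kleene equality. -/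
def pap {X : Type*} (S : PCAStruct X) (u v : Part X) : Part X :=
  u.bind fun a => v.bind fun b => S.app a b

/-- `S` is a partial combinatory algebra: there are `k`, `s` with
`kxy = x` (everywhere defined), `sxy` defined, and `sxyz ≃ (xz)(yz)`. -/
def IsPCA {X : Type*} (S : PCAStruct X) : Prop :=
  ∃ k s : X,
    (∀ x y : X, pap S (S.app k x) (Part.some y) = Part.some x) ∧
    (∀ x y : X, (pap S (S.app s x) (Part.some y)).Dom) ∧
    (∀ x y z : X,
      pap S (pap S (S.app s x) (Part.some y)) (Part.some z)
        = pap S (S.app x z) (S.app y z))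

/-- `t`, `f` are Booleans of `S`: distinct, with a definition-by-cases combinator. -/
def IsBooleans {X : Type*} (S : PCAStruct X) (t f : X) : Prop :=
  t ≠ f ∧ ∃ C : X, ∀ a b : X,
    pap S (pap S (S.app C t) (Part.some a)) (Part.some b) = Part.some a ∧
    pap S (pap S (S.app C f) (Part.some a)) (Part.some b) = Part.some b

/-- Applicative morphism `γ : S → T`: a total relation such that some realizer
`r` tracks application. -/
def IsAppMor {X Y : Type*} (S : PCAStruct X) (T : PCAStruct Y) (γ : X → Set Y) : Prop :=
  (∀ x, (γ x).Nonempty) ∧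
  ∃ r : Y, ∀ x x' z : X, z ∈ S.app x x' → ∀ b ∈ γ x, ∀ b' ∈ γ x',
    ∃ w, w ∈ pap T (T.app r b) (Part.some b') ∧ w ∈ γ z

/-- The preorder on applicative morphisms. -/
def morLE {X Y : Type*} (T : PCAStruct Y) (γ γ' : X → Set Y) : Prop :=
  ∃ s : Y, ∀ x : X, ∀ b ∈ γ x, ∃ c, c ∈ T.app s b ∧ c ∈ γ' x

def morEquiv {X Y : Type*} (T : PCAStruct Y) (γ γ' : X → Set Y) : Prop :=
  morLE T γ γ' ∧ morLE T γ' γ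

/-- Composition of applicative morphisms (as total relations). -/
def morComp {X Y Z : Type*} (γ : X → Set Y) (ε : Y → Set Z) : X → Set Z :=
  fun x => ⋃ y ∈ γ x, ε y

/-- Decidability of a morphism w.r.t. chosen Booleans. -/
def IsDecidableMor {X Y : Type*} (T : PCAStruct Y) (γ : X → Set Y)
    (tX fX : X) (tY fY : Y) : Prop :=
  ∃ d : Y, (∀ b ∈ γ tX, T.app d b = Part.some tY) ∧
    (∀ b ∈ γ fX, T.app d b = Part.some fY)

/-- `rf` represents the partial function `f : X ⇀ X` w.r.t. `γ`. -/
def RepresentsPFun {X Y : Type*} (T : PCAStruct Y) (γ : X → Set Y)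
    (f : X → Option X) (rf : Y) : Prop :=
  ∀ a x, f a = some x → ∀ b ∈ γ a, ∃ c, c ∈ T.app rf b ∧ c ∈ γ x

/-- The pca `K₂(A)` on `A^A` (application via `a`-interrogations). -/
def K2 (mk : List A → A) (qp rp : A → A) : PCAStruct (A → A) where
  app α β := ⟨∀ a, ∃ c, phiA mk qp rp a α β c, fun h a => (h a).choose⟩

/-! ### Interrogations for partial functions -/

/-- Interrogation of a partial `β` by a partial `α`. -/
def PInterrog (mk : List A → A) (qp : A → A) (α β : A → Option A) (L : List A) : Prop :=
  ∀ j (hj : j < L.length), ∃ b, α (mk (L.take j)) = some (qp b) ∧ β b = some (L[j]'hj)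

/-- `φ_α(β) = c` for partial functions. -/
def phiPRel (mk : List A → A) (qp rp : A → A) (α β : A → Option A) (c : A) : Prop :=
  ∃ L, PInterrog mk qp α β L ∧ α (mk L) = some (rp c)

/-- `a`-interrogation of a partial `β` by a partial `α`. -/
def PAInterrog (mk : List A → A) (qp : A → A) (a : A) (α β : A → Option A)
    (L : List A) : Prop :=
  ∀ j (hj : j < L.length), ∃ b, α (mk (a :: L.take j)) = some (qp b) ∧ β b = some (L[j]'hj)

/-- `φ^a(α,β) = c` for partial functions. -/
def phiPA (mk : List A → A) (qp rp : A → A) (a : A) (α β : A → Option A) (c : A) : Prop :=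
  ∃ L, PAInterrog mk qp a α β L ∧ α (mk (a :: L)) = some (rp c)

/-- The (total!) application of `K₂^p(A)` on partial functions. -/
def K2pApp (mk : List A → A) (qp rp : A → A) (α β : A → Option A) : A → Option A :=
  fun a => if h : ∃ c, phiPA mk qp rp a α β c then some h.choose else none

/-- `K₂^p(A)` as a `PCAStruct` (with everywhere-defined application). -/
def K2p (mk : List A → A) (qp rp : A → A) : PCAStruct (A → Option A) :=
  ⟨fun α β => Part.some (K2pApp mk qp rp α β)⟩

/-! ### A pca with standard structure (Booleans, pairing, tuple coding, recursion) -/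

/-- A pca together with the standard derived structure: Booleans with a case
combinator, pairing, an injective standard tuple coding with combinators
manipulating it, and a fixed-point combinator. All of these exist in any
(nontrivial) pca. -/
structure StdPCA (A : Type u) where
  S : PCAStruct A
  isPCA : IsPCA S
  t : A
  f : A
  t_ne_f : t ≠ f
  Cc : A
  C_t : ∀ a b : A, pap S (pap S (S.app Cc t) (Part.some a)) (Part.some b) = Part.some a
  C_f : ∀ a b : A, pap S (pap S (S.app Cc f) (Part.some a)) (Part.some b) = Part.some b
  pairF : A → A → A
  Pc : A
  P0 : A
  P1 : A
  P_spec : ∀ x y : A, pap S (S.app Pc x) (Part.some y) = Part.some (pairF x y)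
  P0_spec : ∀ x y : A, S.app P0 (pairF x y) = Part.some x
  P1_spec : ∀ x y : A, S.app P1 (pairF x y) = Part.some y
  tup : List A → A
  tup_inj : Function.Injective tup
  CONS : A
  CONS_spec : ∀ (x : A) (L : List A),
    pap S (S.app CONS x) (Part.some (tup L)) = Part.some (tup (x :: L))
  SNOC : A
  SNOC_spec : ∀ (L : List A) (y : A),
    pap S (S.app SNOC (tup L)) (Part.some y) = Part.some (tup (L ++ [y]))
  Zc : A
  Z_spec : ∀ g : A, (S.app Zc g).Dom ∧ ∀ zg ∈ S.app Zc g, ∀ x : A,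
    S.app zg x = pap S (S.app g zg) (Part.some x)

/-- The partial function `x ↦ a·x` represented by `a ∈ A`. -/
def abar (P : StdPCA A) (a : A) : A → Option A :=
  fun x => if h : (P.S.app a x).Dom then some ((P.S.app a x).get h) else none

/-- An `x`-interrogation of the oracle `g : A ⇀ A` by `a ∈ A`, inside the pca. -/
def OInterrog (P : StdPCA A) (g : A → Option A) (a x : A) (L : List A) : Prop :=
  ∀ j (hj : j < L.length), ∃ v,
    P.S.app a (P.tup (x :: L.take j)) = Part.some (P.pairF P.f v) ∧ g v = some (L[j]'hj)

/-- The oracle application of `A[g]` : `a ·^g x = c`. -/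
def oapp (P : StdPCA A) (g : A → Option A) (a x c : A) : Prop :=
  ∃ L, OInterrog P g a x L ∧ P.S.app a (P.tup (x :: L)) = Part.some (P.pairF P.t c)

/-- `fn ≤_T g` : `fn` is representable in `A[g]`. -/
def leT (P : StdPCA A) (fn g : A → Option A) : Prop :=
  ∃ a : A, ∀ x y, fn x = some y → oapp P g a x y

/-- `j` is the join `f ⊔ g`. -/
def JoinSpec (P : StdPCA A) (f g j : A → Option A) : Prop :=
  (∀ x, j (P.pairF P.t x) = f x) ∧ (∀ x, j (P.pairF P.f x) = g x) ∧
  (∀ y, (∀ x, y ≠ P.pairF P.t x ∧ y ≠ P.pairF P.f x) → j y = none)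

/-- `K₂(A)` (built from the coding `mk`, `q`, `r`) is compatible with the pca
structure on `A`: elements of `A` translate between the codings and between
`q, r` and `⊥, ⊤`. -/
def CompatCoding (P : StdPCA A) (mk : List A → A) (q r : A) : Prop :=
  (∃ a : A, ∀ L, P.S.app a (mk L) = Part.some (P.tup L)) ∧
  (∃ b : A, ∀ L, P.S.app b (P.tup L) = Part.some (mk L)) ∧
  (∃ c : A, P.S.app c q = Part.some P.f ∧ P.S.app c r = Part.some P.t)

/-! ### Auxiliary machinery -/

section Aux

variable {A : Type u}

/-- Expressions in one variable over a pca. -/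
inductive Expr (A : Type u) : Type u
  | const : A → Expr A
  | var : Expr A
  | app : Expr A → Expr A → Expr A

/-- Evaluation of an expression. -/
def Expr.eval (S : PCAStruct A) : Expr A → A → Part A
  | .const c, _ => Part.some c
  | .var, x => Part.some x
  | .app e₁ e₂, x => pap S (e₁.eval S x) (e₂.eval S x)

theorem pap_some_some (S : PCAStruct A) (a b : A) :
    pap S (Part.some a) (Part.some b) = S.app a b := by
  simp [pap]

/-- Combinatory completeness for one variable. -/
theorem comb_complete (S : PCAStruct A) (h : IsPCA S) (e : Expr A) :
    ∃ u : A, ∀ x : A, S.app u x = e.eval S x := by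
  obtain ⟨k, s, hk, hs, hsp⟩ := h
  have kdef : ∀ c : A, ∃ u, S.app k c = Part.some u := by
    intro c
    have hmem : c ∈ pap S (S.app k c) (Part.some c) := by
      rw [hk]; exact Part.mem_some c
    rw [pap] at hmem
    obtain ⟨u, hu, -⟩ := Part.mem_bind_iff.mp hmem
    exact ⟨u, Part.eq_some_iff.mpr hu⟩
  induction e with
  | const c =>
      obtain ⟨u, hu⟩ := kdef c
      refine ⟨u, fun x => ?_⟩
      have := hk c x
      rw [hu, pap_some_some] at this
      exact this
  | var =>
      have hd := hs k k
      obtain ⟨i, hi⟩ := Part.dom_iff_mem.mp hd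
      have hieq : pap S (S.app s k) (Part.some k) = Part.some i :=
        Part.eq_some_iff.mpr hi
      refine ⟨i, fun x => ?_⟩
      obtain ⟨kx, hkx⟩ := kdef x
      have h1 : S.app i x = pap S (S.app k x) (S.app k x) := by
        rw [← pap_some_some S i x, ← hieq, hsp]
      have h2 := hk x kx
      rw [hkx, pap_some_some] at h2
      rw [h1, hkx, pap_some_some, h2]
      rfl
  | app e₁ e₂ ih₁ ih₂ =>
      obtain ⟨u₁, h₁⟩ := ih₁
      obtain ⟨u₂, h₂⟩ := ih₂
      have hd := hs u₁ u₂
      obtain ⟨w, hw⟩ := Part.dom_iff_mem.mp hd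
      have hweq : pap S (S.app s u₁) (Part.some u₂) = Part.some w :=
        Part.eq_some_iff.mpr hw
      refine ⟨w, fun x => ?_⟩
      have h3 : S.app w x = pap S (S.app u₁ x) (S.app u₂ x) := by
        rw [← pap_some_some S w x, ← hweq, hsp]
      rw [h3, h₁, h₂]
      rfl

/-- Determinism of `phiA` for the standard coding. -/
theorem phiA_det (code : List A → A) (hcode : Function.Injective code) (q r : A)
    (hqr : q ≠ r) (a : A) (α γ : A → A) {c₁ c₂ : A}
    (h₁ : phiA code (fun x => code [q, x]) (fun x => code [r, x]) a α γ c₁)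
    (h₂ : phiA code (fun x => code [q, x]) (fun x => code [r, x]) a α γ c₂) :
    c₁ = c₂ := by
  obtain ⟨L₁, hI₁, hE₁⟩ := h₁
  obtain ⟨L₂, hI₂, hE₂⟩ := h₂
  have htake : ∀ j, j ≤ L₁.length → j ≤ L₂.length → L₁.take j = L₂.take j := by
    intro j
    induction j with
    | zero => intro _ _; simp
    | succ j ih =>
        intro h1 h2
        have hj1 : j < L₁.length := Nat.lt_of_succ_le h1
        have hj2 : j < L₂.length := Nat.lt_of_succ_le h2
        have ht := ih (Nat.le_of_lt hj1) (Nat.le_of_lt hj2)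
        obtain ⟨b₁, hb₁, hv₁⟩ := hI₁ j hj1
        obtain ⟨b₂, hb₂, hv₂⟩ := hI₂ j hj2
        rw [ht] at hb₁
        have hbb : b₁ = b₂ := by
          have := hcode (hb₁.symm.trans hb₂)
          simpa using this
        have hgetsame : L₁[j] = L₂[j] := by
          rw [← hv₁, ← hv₂, hbb]
        rw [List.take_succ, List.take_succ, ht,
          List.getElem?_eq_getElem hj1, List.getElem?_eq_getElem hj2, hgetsame]
  have hlen : L₁.length = L₂.length := by
    rcases lt_trichotomy L₁.length L₂.length with hlt | heq | hgt
    · exfalso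
      obtain ⟨b, hb, -⟩ := hI₂ L₁.length hlt
      have ht := htake L₁.length le_rfl (Nat.le_of_lt hlt)
      rw [List.take_length] at ht
      rw [← ht] at hb
      have hl := hcode (hE₁.symm.trans hb)
      injection hl with h1 _
      exact hqr h1.symm
    · exact heq
    · exfalso
      obtain ⟨b, hb, -⟩ := hI₁ L₂.length hgt
      have ht := htake L₂.length (Nat.le_of_lt hgt) le_rfl
      rw [List.take_length] at ht
      rw [ht] at hb
      have hl := hcode (hE₂.symm.trans hb)
      injection hl with h1 _
      exact hqr h1.symm
  have hLL : L₁ = L₂ := by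
    have := htake L₁.length le_rfl (le_of_eq hlen)
    rwa [List.take_length, hlen, List.take_length] at this
  rw [hLL] at hE₁
  have := hcode (hE₁.symm.trans hE₂)
  simpa using this

/-- The expression computing, on input `code (x :: M)`, the translation of one
oracle step of `a` at `tup (x :: M)` into the `K₂` coding. -/
def machineExpr (P : StdPCA A) (a a₁ b₂ q r : A) : Expr A :=
  .app (.app (.app (.const P.Cc)
      (.app (.const P.P0) (.app (.const a) (.app (.const a₁) .var))))
    (.app (.const b₂) (.app (.app (.const P.CONS) (.const r))
      (.app (.app (.const P.CONS)
        (.app (.const P.P1) (.app (.const a) (.app (.const a₁) .var))))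
        (.const (P.tup []))))))
    (.app (.const b₂) (.app (.app (.const P.CONS) (.const q))
      (.app (.app (.const P.CONS)
        (.app (.const P.P1) (.app (.const a) (.app (.const a₁) .var))))
        (.const (P.tup [])))))

theorem machineExpr_eval (P : StdPCA A) (code : List A → A) (a a₁ b₂ q r : A)
    (ha₁ : ∀ L, P.S.app a₁ (code L) = Part.some (P.tup L))
    (hb₂ : ∀ L, P.S.app b₂ (P.tup L) = Part.some (code L))
    (x : A) (M : List A) (b' v : A)
    (hav : P.S.app a (P.tup (x :: M)) = Part.some (P.pairF b' v)) :
    (machineExpr P a a₁ b₂ q r).eval P.S (code (x :: M)) =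
      pap P.S (pap P.S (P.S.app P.Cc b') (Part.some (code [r, v])))
        (Part.some (code [q, v])) := by
  simp only [machineExpr, Expr.eval, pap_some_some, ha₁, hav, P.P0_spec, P.P1_spec,
    P.CONS_spec, hb₂]

end Aux

/-- Let `K₂(A)` be compatible with the pca `A`, and let
`B ⊆ A^A` be nonempty and closed under application. If every partial function
`x ↦ ax` (`a ∈ A`) extends to an element of `B`, then `B` is downwards closed
w.r.t. `≤_T`. -/
theorem statement12 {A : Type u} (P : StdPCA A) (code : List A → A)
    (hcode : Function.Injective code) (q r : A) (hqr : q ≠ r)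
    (hcompat : CompatCoding P code q r)
    (B : Set (A → A)) (hne : B.Nonempty)
    (hclosed : ∀ α ∈ B, ∀ β ∈ B, ∀ γ : A → A,
      γ ∈ (K2 code (fun x => code [q, x]) (fun x => code [r, x])).app α β → γ ∈ B)
    (hext : ∀ a : A, ∃ α ∈ B, ∀ x y : A, P.S.app a x = Part.some y → α x = y) :
    ∀ γ ∈ B, ∀ β : A → A,
      leT P (fun x => some (β x)) (fun x => some (γ x)) → β ∈ B := by
  intro γ hγ β hle
  obtain ⟨a, ha⟩ := hle
  obtain ⟨⟨a₁, ha₁⟩, ⟨b₂, hb₂⟩, -⟩ := hcompat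
  obtain ⟨a', ha'⟩ := comb_complete P.S P.isPCA (machineExpr P a a₁ b₂ q r)
  obtain ⟨α, hαB, hα⟩ := hext a'
  have hquery : ∀ x (M : List A) v,
      P.S.app a (P.tup (x :: M)) = Part.some (P.pairF P.f v) →
      α (code (x :: M)) = code [q, v] := by
    intro x M v hav
    apply hα
    rw [ha', machineExpr_eval P code a a₁ b₂ q r ha₁ hb₂ x M P.f v hav, P.C_f]
  have hret : ∀ x (M : List A) c,
      P.S.app a (P.tup (x :: M)) = Part.some (P.pairF P.t c) →
      α (code (x :: M)) = code [r, c] := by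
    intro x M c hav
    apply hα
    rw [ha', machineExpr_eval P code a a₁ b₂ q r ha₁ hb₂ x M P.t c hav, P.C_t]
  have hphi : ∀ x,
      phiA code (fun z => code [q, z]) (fun z => code [r, z]) x α γ (β x) := by
    intro x
    obtain ⟨L, hIO, hfin⟩ := ha x (β x) rfl
    refine ⟨L, ?_, hret x L (β x) hfin⟩
    intro j hj
    obtain ⟨v, hv1, hv2⟩ := hIO j hj
    exact ⟨v, hquery x (L.take j) v hv1, Option.some.inj hv2⟩
  have hdom : ∀ x, ∃ c,
      phiA code (fun z => code [q, z]) (fun z => code [r, z]) x α γ c :=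
    fun x => ⟨β x, hphi x⟩
  refine hclosed α hαB γ hγ β ⟨hdom, funext fun x => ?_⟩
  exact phiA_det code hcode q r hqr x α γ ((hdom x).choose_spec) (hphi x)

end OostenK2
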